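/- Let A be a finite nonempty subset of ℤ^d, and for 1 ≤ j ≤ d let Π^j : ℤ^d → ℤ^{d−1} be the projection deleting the j-th coordinate and A_j = Π^j(A). Then there exists a constant C > 0 depending only on d such that max_{1 ≤ j ≤ d} |A_j| ≥ C · |A|^{(d−1)/d}. -/

import Mathlib

open Finset

private lemma remove_comm {n : ℕ} (j : Fin (n + 1)) (f : Fin (n + 2) → ℤ) :
    Fin.removeNth (Fin.last n) (Fin.removeNth j.castSucc f)
      = Fin.removeNth j (Fin.removeNth (Fin.last (n + 1)) f) := by
  funext i
  simp [Fin.removeNth, Fin.succAbove_last, Fin.castSucc_succAbove_castSucc]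

private lemma remove_last_coord {n : ℕ} (j : Fin (n + 1)) (f : Fin (n + 2) → ℤ) :
    Fin.removeNth j.castSucc f (Fin.last n) = f (Fin.last (n + 1)) := by
  have h : j.castSucc ≠ Fin.last (n + 1) := (Fin.castSucc_lt_last j).ne
  simp [Fin.removeNth, Fin.succAbove_ne_last_last h]

private lemma removeNth_last_injOn {n : ℕ} (t : ℤ)
    (S : Finset (Fin (n + 2) → ℤ)) (hS : ∀ f ∈ S, f (Fin.last (n + 1)) = t) :
    ((S.image (fun f => Fin.removeNth (Fin.last (n + 1)) f)).card = S.card) := by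
  apply Finset.card_image_of_injOn
  intro g1 h1 g2 h2 h
  funext i
  induction i using Fin.lastCases with
  | last => rw [hS g1 h1, hS g2 h2]
  | cast i =>
    have := congrFun h i
    simpa [Fin.removeNth, Fin.succAbove_last] using this

/-- Discrete Loomis–Whitney type inequality: some coordinate projection of a
finite nonempty subset of `ℤ^d` (deleting one coordinate) has cardinality at
least `C · |A|^{(d-1)/d}`, for a constant `C > 0` depending only on `d`. -/
theorem max_projection_card_ge
    (n : ℕ) :
    ∃ C > (0 : ℝ), ∀ A : Finset (Fin (n + 1) → ℤ), A.Nonempty →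
      ∃ j : Fin (n + 1),
        C * (A.card : ℝ) ^ ((n : ℝ) / (n + 1)) ≤
          ((A.image (fun f => j.removeNth f)).card : ℝ) := by
  induction n with
  | zero =>
    refine ⟨1, one_pos, fun A hA => ⟨0, ?_⟩⟩
    have h1 : (1 : ℕ) ≤ (A.image (fun f => (0 : Fin 1).removeNth f)).card :=
      Finset.card_pos.mpr (hA.image _)
    have h2 : ((0 : ℕ) : ℝ) / ((0 : ℕ) + 1) = 0 := by norm_num
    rw [h2, Real.rpow_zero, mul_one]
    exact_mod_cast h1
  | succ n IH =>
    obtain ⟨C, hC, hIH⟩ := IH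
    have hn1 : (0 : ℝ) < (n : ℝ) + 1 := by positivity
    have hn2 : (0 : ℝ) < (n : ℝ) + 2 := by positivity
    refine ⟨(C / ((n : ℝ) + 1)) ^ (((n : ℝ) + 1) / ((n : ℝ) + 2)), by positivity, ?_⟩
    intro A hA
    set lst : Fin (n + 2) := Fin.last (n + 1) with hlst
    obtain ⟨j₀, -, hj₀⟩ := Finset.exists_max_image (univ : Finset (Fin (n + 2)))
      (fun j => (A.image (fun f => j.removeNth f)).card) ⟨lst, mem_univ _⟩
    refine ⟨j₀, ?_⟩
    set M : ℕ := (A.image (fun f => j₀.removeNth f)).card with hMdef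
    have hMpos : 0 < M := Finset.card_pos.mpr (hA.image _)
    set T : Finset ℤ := A.image (fun f => f lst) with hT
    set slice : ℤ → Finset (Fin (n + 2) → ℤ) :=
      fun t => A.filter (fun f => f lst = t) with hslice
    have hslice_mem : ∀ t (f : Fin (n + 2) → ℤ), f ∈ slice t ↔ f ∈ A ∧ f lst = t := by
      intro t f; simp [hslice]
    -- cardinality of A as a sum over slices
    have hcardsum : A.card = ∑ t ∈ T, (slice t).card :=
      Finset.card_eq_sum_card_fiberwise (fun f hf => Finset.mem_image_of_mem _ hf)
    -- slices are nonempty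
    have hslice_ne : ∀ t ∈ T, (slice t).Nonempty := by
      intro t ht
      obtain ⟨f, hf, hft⟩ := Finset.mem_image.mp ht
      exact ⟨f, (hslice_mem t f).mpr ⟨hf, hft⟩⟩
    -- projecting a slice along the last coordinate keeps its cardinality
    have hslicecard : ∀ t,
        ((slice t).image (fun f => Fin.removeNth lst f)).card = (slice t).card := by
      intro t
      exact removeNth_last_injOn t _ (fun f hf => ((hslice_mem t f).mp hf).2)
    -- slices are no larger than the last projection, hence ≤ M
    have hsliceM : ∀ t, (slice t).card ≤ M := by
      intro t
      rw [← hslicecard t]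
      calc ((slice t).image (fun f => Fin.removeNth lst f)).card
          ≤ (A.image (fun f => Fin.removeNth lst f)).card :=
            Finset.card_le_card (Finset.image_subset_image (Finset.filter_subset _ _))
        _ ≤ M := hj₀ lst (mem_univ _)
    -- IH applied to each slice
    have h1 : ∀ t ∈ T, ∃ j : Fin (n + 1),
        C * ((slice t).card : ℝ) ^ ((n : ℝ) / ((n : ℝ) + 1)) ≤
          (((slice t).image (fun f => Fin.removeNth j.castSucc f)).card : ℝ) := by
      intro t ht
      set Bt : Finset (Fin (n + 1) → ℤ) :=
        (slice t).image (fun f => Fin.removeNth lst f) with hBt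
      have hBtne : Bt.Nonempty := (hslice_ne t ht).image _
      obtain ⟨j, hj⟩ := hIH Bt hBtne
      refine ⟨j, ?_⟩
      have hcard : Bt.card = (slice t).card := hslicecard t
      have himg : Bt.image (fun f => j.removeNth f) =
          ((slice t).image (fun f => Fin.removeNth j.castSucc f)).image
            (fun f => Fin.removeNth (Fin.last n) f) := by
        rw [hBt, Finset.image_image, Finset.image_image]
        congr 1
        funext f
        exact (remove_comm j f).symm
      have hle : (Bt.image (fun f => j.removeNth f)).card ≤
          ((slice t).image (fun f => Fin.removeNth j.castSucc f)).card := by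
        rw [himg]; exact Finset.card_image_le
      calc C * ((slice t).card : ℝ) ^ ((n : ℝ) / ((n : ℝ) + 1))
          = C * (Bt.card : ℝ) ^ ((n : ℝ) / ((n : ℝ) + 1)) := by rw [hcard]
        _ ≤ ((Bt.image (fun f => j.removeNth f)).card : ℝ) := hj
        _ ≤ _ := by exact_mod_cast hle
    -- disjointness: slice projections sum to at most the full projection
    have h2 : ∀ j : Fin (n + 1),
        ∑ t ∈ T, ((slice t).image (fun f => Fin.removeNth j.castSucc f)).card ≤ M := by
      intro j
      set P : Finset (Fin (n + 1) → ℤ) :=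
        A.image (fun f => Fin.removeNth j.castSucc f) with hP
      have hPcard : P.card = ∑ t ∈ T, (P.filter (fun g => g (Fin.last n) = t)).card := by
        apply Finset.card_eq_sum_card_fiberwise
        intro g hg
        obtain ⟨f, hf, rfl⟩ := Finset.mem_image.mp hg
        simp only [Finset.mem_coe]
        rw [remove_last_coord]
        exact Finset.mem_image_of_mem _ hf
      have hsub : ∀ t, (slice t).image (fun f => Fin.removeNth j.castSucc f) ⊆
          P.filter (fun g => g (Fin.last n) = t) := by
        intro t g hg
        obtain ⟨f, hf, rfl⟩ := Finset.mem_image.mp hg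
        obtain ⟨hfA, hft⟩ := (hslice_mem t f).mp hf
        refine Finset.mem_filter.mpr ⟨Finset.mem_image_of_mem _ hfA, ?_⟩
        rw [remove_last_coord, ← hlst, hft]
      calc ∑ t ∈ T, ((slice t).image (fun f => Fin.removeNth j.castSucc f)).card
          ≤ ∑ t ∈ T, (P.filter (fun g => g (Fin.last n) = t)).card :=
            Finset.sum_le_sum (fun t _ => Finset.card_le_card (hsub t))
        _ = P.card := hPcard.symm
        _ ≤ M := by
            have := hj₀ j.castSucc (mem_univ _)
            simpa [hP] using this
    -- key real estimates
    have hMR : (0 : ℝ) < (M : ℝ) := by exact_mod_cast hMpos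
    have key2 : C * ∑ t ∈ T, ((slice t).card : ℝ) ^ ((n : ℝ) / ((n : ℝ) + 1)) ≤
        ((n : ℝ) + 1) * M := by
      rw [Finset.mul_sum]
      have step : ∀ t ∈ T, C * ((slice t).card : ℝ) ^ ((n : ℝ) / ((n : ℝ) + 1)) ≤
          ((∑ j : Fin (n + 1),
            ((slice t).image (fun f => Fin.removeNth j.castSucc f)).card : ℕ) : ℝ) := by
        intro t ht
        obtain ⟨j, hj⟩ := h1 t ht
        refine hj.trans ?_
        exact_mod_cast Finset.single_le_sum
          (f := fun j : Fin (n + 1) =>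
            ((slice t).image (fun f => Fin.removeNth j.castSucc f)).card)
          (fun _ _ => Nat.zero_le _) (mem_univ j)
      refine (Finset.sum_le_sum step).trans ?_
      have : ∑ t ∈ T, (∑ j : Fin (n + 1),
          ((slice t).image (fun f => Fin.removeNth j.castSucc f)).card) ≤ (n + 1) * M := by
        rw [Finset.sum_comm]
        calc ∑ j : Fin (n + 1), ∑ t ∈ T,
            ((slice t).image (fun f => Fin.removeNth j.castSucc f)).card
            ≤ ∑ _j : Fin (n + 1), M := Finset.sum_le_sum (fun j _ => h2 j)
          _ = (n + 1) * M := by simp [mul_comm]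
      calc (∑ t ∈ T, ((∑ j : Fin (n + 1),
            ((slice t).image (fun f => Fin.removeNth j.castSucc f)).card : ℕ) : ℝ))
          = ((∑ t ∈ T, ∑ j : Fin (n + 1),
            ((slice t).image (fun f => Fin.removeNth j.castSucc f)).card : ℕ) : ℝ) := by
            push_cast; ring
        _ ≤ (((n + 1) * M : ℕ) : ℝ) := by exact_mod_cast this
        _ = ((n : ℝ) + 1) * M := by push_cast; ring
    have key1 : (A.card : ℝ) ≤ (M : ℝ) ^ ((1 : ℝ) / ((n : ℝ) + 1)) *
        ∑ t ∈ T, ((slice t).card : ℝ) ^ ((n : ℝ) / ((n : ℝ) + 1)) := by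
      have : (A.card : ℝ) = ∑ t ∈ T, ((slice t).card : ℝ) := by
        rw [hcardsum]; push_cast; ring
      rw [this, Finset.mul_sum]
      refine Finset.sum_le_sum (fun t ht => ?_)
      have hcpos : (0 : ℝ) < ((slice t).card : ℝ) := by
        exact_mod_cast Finset.card_pos.mpr (hslice_ne t ht)
      have hsplit : ((slice t).card : ℝ) =
          ((slice t).card : ℝ) ^ ((n : ℝ) / ((n : ℝ) + 1)) *
            ((slice t).card : ℝ) ^ ((1 : ℝ) / ((n : ℝ) + 1)) := by
        rw [← Real.rpow_add hcpos]
        have : (n : ℝ) / ((n : ℝ) + 1) + 1 / ((n : ℝ) + 1) = 1 := by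
          field_simp
        rw [this, Real.rpow_one]
      calc ((slice t).card : ℝ)
          = ((slice t).card : ℝ) ^ ((n : ℝ) / ((n : ℝ) + 1)) *
            ((slice t).card : ℝ) ^ ((1 : ℝ) / ((n : ℝ) + 1)) := hsplit
        _ ≤ ((slice t).card : ℝ) ^ ((n : ℝ) / ((n : ℝ) + 1)) *
            (M : ℝ) ^ ((1 : ℝ) / ((n : ℝ) + 1)) :=
            mul_le_mul_of_nonneg_left
              (Real.rpow_le_rpow hcpos.le (by exact_mod_cast hsliceM t) (by positivity))
              (Real.rpow_nonneg hcpos.le _)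
        _ = (M : ℝ) ^ ((1 : ℝ) / ((n : ℝ) + 1)) *
            ((slice t).card : ℝ) ^ ((n : ℝ) / ((n : ℝ) + 1)) := mul_comm _ _
    -- combine
    have hsum_nonneg : (0:ℝ) ≤ ∑ t ∈ T, ((slice t).card : ℝ) ^ ((n : ℝ) / ((n : ℝ) + 1)) :=
      Finset.sum_nonneg (fun t _ => Real.rpow_nonneg (by positivity) _)
    have hmain : (A.card : ℝ) ≤ (((n : ℝ) + 1) / C) *
        (M : ℝ) ^ (((n : ℝ) + 2) / ((n : ℝ) + 1)) := by
      have h3 : ∑ t ∈ T, ((slice t).card : ℝ) ^ ((n : ℝ) / ((n : ℝ) + 1)) ≤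
          ((n : ℝ) + 1) * M / C := by
        rw [le_div_iff₀ hC]
        calc (∑ t ∈ T, ((slice t).card : ℝ) ^ ((n : ℝ) / ((n : ℝ) + 1))) * C
            = C * ∑ t ∈ T, ((slice t).card : ℝ) ^ ((n : ℝ) / ((n : ℝ) + 1)) := by ring
          _ ≤ ((n : ℝ) + 1) * M := key2
      calc (A.card : ℝ) ≤ (M : ℝ) ^ ((1 : ℝ) / ((n : ℝ) + 1)) *
            ∑ t ∈ T, ((slice t).card : ℝ) ^ ((n : ℝ) / ((n : ℝ) + 1)) := key1
        _ ≤ (M : ℝ) ^ ((1 : ℝ) / ((n : ℝ) + 1)) * (((n : ℝ) + 1) * M / C) := by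
            apply mul_le_mul_of_nonneg_left h3 (Real.rpow_nonneg hMR.le _)
        _ = (((n : ℝ) + 1) / C) *
            ((M : ℝ) ^ ((1 : ℝ) / ((n : ℝ) + 1)) * (M : ℝ) ^ (1 : ℝ)) := by
            rw [Real.rpow_one]; ring
        _ = (((n : ℝ) + 1) / C) * (M : ℝ) ^ (((n : ℝ) + 2) / ((n : ℝ) + 1)) := by
            rw [← Real.rpow_add hMR]
            congr 2
            field_simp
            ring
    -- take both sides to the power (n+1)/(n+2)
    set e : ℝ := ((n : ℝ) + 1) / ((n : ℝ) + 2) with he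
    have he_pos : 0 < e := by positivity
    have hexp : ((n : ℝ) + 2) / ((n : ℝ) + 1) * e = 1 := by
      rw [he]; field_simp
    have hfin : (A.card : ℝ) ^ e ≤ (((n : ℝ) + 1) / C) ^ e * (M : ℝ) := by
      have := Real.rpow_le_rpow (by positivity) hmain he_pos.le
      rwa [Real.mul_rpow (by positivity) (Real.rpow_nonneg hMR.le _),
        ← Real.rpow_mul hMR.le, hexp, Real.rpow_one] at this
    -- now conclude
    have hgoal : (C / ((n : ℝ) + 1)) ^ e * (A.card : ℝ) ^ e ≤ (M : ℝ) := by
      have hCpos' : (0:ℝ) < C / ((n : ℝ) + 1) := by positivity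
      have h4 : (C / ((n : ℝ) + 1)) ^ e * ((((n : ℝ) + 1) / C) ^ e * (M : ℝ)) = (M : ℝ) := by
        rw [← mul_assoc, ← Real.mul_rpow hCpos'.le (by positivity)]
        have : C / ((n : ℝ) + 1) * (((n : ℝ) + 1) / C) = 1 := by
          field_simp
        rw [this, Real.one_rpow, one_mul]
      calc (C / ((n : ℝ) + 1)) ^ e * (A.card : ℝ) ^ e
          ≤ (C / ((n : ℝ) + 1)) ^ e * ((((n : ℝ) + 1) / C) ^ e * (M : ℝ)) :=
            mul_le_mul_of_nonneg_left hfin (Real.rpow_nonneg hCpos'.le _)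
        _ = (M : ℝ) := h4
    have hcast : ((n + 1 : ℕ) : ℝ) / (((n + 1 : ℕ) : ℝ) + 1) = e := by
      rw [he]; push_cast; ring
    rw [hcast]
    exact hgoal
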